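/- Let φ be an Orlicz function such that ∑_{n=n₁}^∞ φ(1/n) < ∞ for some n₁ ∈ ℕ. Then for x ∈ ces_φ the following are equivalent: x ∈ A_φ, and x is order continuous, i.e. for every sequence (x_m) in ℝ^ℕ with 0 ≤ x_m(i) ≤ |x(i)| for all m, i and x_m(i) → 0 as m → ∞ for every i, one has ‖x_m‖_φ → 0. -/

import Mathlib

open scoped ENNReal
open Filter

/-- An Orlicz function: `φ : ℝ → [0,∞]` even, convex, left continuous on `ℝ₊`,
continuous at zero, with `φ 0 = 0` and `φ u → ∞` as `u → ∞`. -/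
structure OrliczFunction where
  toFun : ℝ → ℝ≥0∞
  even' : ∀ u : ℝ, toFun (-u) = toFun u
  convex' : ∀ u v t : ℝ, 0 ≤ t → t ≤ 1 →
    toFun (t * u + (1 - t) * v) ≤ ENNReal.ofReal t * toFun u + ENNReal.ofReal (1 - t) * toFun v
  map_zero' : toFun 0 = 0
  leftContinuous' : ∀ t : ℝ, 0 < t → Tendsto toFun (nhdsWithin t (Set.Iio t)) (nhds (toFun t))
  continuousAtZero' : Tendsto toFun (nhds 0) (nhds 0)
  tendsto_top' : Tendsto toFun atTop (nhds ⊤)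

/-- The Cesàro mean `σx(n) = (1/n) ∑_{j=1}^n |x j|` (with `0`-based indexing). -/
noncomputable def cesaroMean (x : ℕ → ℝ) (n : ℕ) : ℝ :=
  (∑ j ∈ Finset.range (n + 1), |x j|) / (n + 1)

/-- The modular `ρ_φ(x) = ∑_i φ(σx(i))`. -/
noncomputable def rho (φ : OrliczFunction) (x : ℕ → ℝ) : ℝ≥0∞ :=
  ∑' n : ℕ, φ.toFun (cesaroMean x n)

/-- The Cesàro–Orlicz sequence space `ces_φ`. -/
def cesOrlicz (φ : OrliczFunction) : Set (ℕ → ℝ) :=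
  {x | ∃ lam : ℝ, 0 < lam ∧ rho φ (fun i => lam * x i) < ⊤}

/-- The Luxemburg norm `‖x‖_φ = inf {λ > 0 : ρ_φ(x/λ) ≤ 1}`. -/
noncomputable def luxNorm (φ : OrliczFunction) (x : ℕ → ℝ) : ℝ :=
  sInf {lam : ℝ | 0 < lam ∧ rho φ (fun i => x i / lam) ≤ 1}

/-- The subspace `A_φ` of `ces_φ`. -/
def Aphi (φ : OrliczFunction) : Set (ℕ → ℝ) :=
  {x | x ∈ cesOrlicz φ ∧ ∀ k : ℝ, 0 < k → ∃ nk : ℕ,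
    ∑' n : ℕ, φ.toFun ((k / ((nk + n + 1 : ℕ) : ℝ)) * ∑ i ∈ Finset.range (nk + n + 1), |x i|) < ⊤}

/-- `∃ n₁, ∑_{n=n₁}^∞ φ(1/n) < ∞`. -/
def TailFinite (φ : OrliczFunction) : Prop :=
  ∃ n₁ : ℕ, ∑' n : ℕ, φ.toFun (((n₁ + n + 1 : ℕ) : ℝ)⁻¹) < ⊤

/-- The `Δ₂`-condition at zero. -/
def Delta2Zero (φ : OrliczFunction) : Prop :=
  ∃ K : ℝ, 0 < K ∧ ∃ a : ℝ, 0 < a ∧ 0 < φ.toFun a ∧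
    ∀ u : ℝ, 0 ≤ u → u ≤ a → φ.toFun (2 * u) ≤ ENNReal.ofReal K * φ.toFun u

/-- `φ` takes only finite values. -/
def FiniteValued (φ : OrliczFunction) : Prop := ∀ u : ℝ, φ.toFun u ≠ ⊤

-- AUX LEMMAS
lemma OF.mono (φ : OrliczFunction) {u v : ℝ} (hu : 0 ≤ u) (huv : u ≤ v) :
    φ.toFun u ≤ φ.toFun v := by
  rcases eq_or_lt_of_le huv with rfl | hlt
  · exact le_rfl
  have hv : 0 < v := lt_of_le_of_lt hu hlt
  have ht1 : u / v ≤ 1 := by rw [div_le_one hv]; exact huv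
  have h := φ.convex' v 0 (u / v) (by positivity) ht1
  rw [mul_zero, add_zero, div_mul_cancel₀ _ hv.ne', φ.map_zero', mul_zero, add_zero] at h
  calc φ.toFun u ≤ ENNReal.ofReal (u / v) * φ.toFun v := h
    _ ≤ 1 * φ.toFun v := by gcongr; exact ENNReal.ofReal_le_one.mpr ht1
    _ = φ.toFun v := one_mul _

lemma OF.scale (φ : OrliczFunction) {s : ℝ} (u : ℝ) (hs : 0 ≤ s) (hs1 : s ≤ 1) :
    φ.toFun (s * u) ≤ ENNReal.ofReal s * φ.toFun u := by
  have h := φ.convex' u 0 s hs hs1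
  rwa [mul_zero, add_zero, φ.map_zero', mul_zero, add_zero] at h

lemma OF.add_le (φ : OrliczFunction) (a b : ℝ) :
    φ.toFun (a + b) ≤ φ.toFun (2 * a) + φ.toFun (2 * b) := by
  have h := φ.convex' (2 * a) (2 * b) (1 / 2) (by norm_num) (by norm_num)
  have e : (1 / 2 : ℝ) * (2 * a) + (1 - 1 / 2) * (2 * b) = a + b := by ring
  rw [e] at h
  refine h.trans ?_
  have h1 : ENNReal.ofReal (1 / 2 : ℝ) ≤ 1 := ENNReal.ofReal_le_one.mpr (by norm_num)
  have h2 : ENNReal.ofReal (1 - 1 / 2 : ℝ) ≤ 1 := ENNReal.ofReal_le_one.mpr (by norm_num)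
  calc _ ≤ 1 * φ.toFun (2 * a) + 1 * φ.toFun (2 * b) := by gcongr
    _ = _ := by rw [one_mul, one_mul]

lemma cesaroMean_nonneg (x : ℕ → ℝ) (n : ℕ) : 0 ≤ cesaroMean x n := by
  unfold cesaroMean; positivity

lemma cesaroMean_mono {x y : ℕ → ℝ} (h : ∀ i, |x i| ≤ |y i|) (n : ℕ) :
    cesaroMean x n ≤ cesaroMean y n := by
  unfold cesaroMean
  have hs : ∑ j ∈ Finset.range (n + 1), |x j| ≤ ∑ j ∈ Finset.range (n + 1), |y j| :=
    Finset.sum_le_sum fun j _ => h j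
  gcongr

lemma cesaroMean_smul (s : ℝ) (x : ℕ → ℝ) (n : ℕ) :
    cesaroMean (fun i => s * x i) n = |s| * cesaroMean x n := by
  unfold cesaroMean
  simp only [abs_mul]
  rw [← Finset.mul_sum, mul_div_assoc]

lemma rho_mono (φ : OrliczFunction) {x y : ℕ → ℝ} (h : ∀ i, |x i| ≤ |y i|) :
    rho φ x ≤ rho φ y :=
  ENNReal.tsum_le_tsum fun n => OF.mono φ (cesaroMean_nonneg _ _) (cesaroMean_mono h n)

lemma lset_nonempty (φ : OrliczFunction) {x : ℕ → ℝ} {c : ℝ} (hc : 0 < c)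
    (hfin : rho φ (fun i => c * x i) < ⊤) :
    ∃ lam : ℝ, 0 < lam ∧ rho φ (fun i => x i / lam) ≤ 1 := by
  set R := rho φ (fun i => c * x i) with hR
  set t : ℝ := max 1 R.toReal with hT
  have ht1 : 1 ≤ t := le_max_left _ _
  have ht0 : 0 < t := lt_of_lt_of_le one_pos ht1
  refine ⟨t / c, by positivity, ?_⟩
  have key : (fun i => x i / (t / c)) = (fun i => (1 / t) * (c * x i)) := by
    funext i; field_simp
  have hb : rho φ (fun i => x i / (t / c)) ≤ ENNReal.ofReal (1 / t) * R := by
    rw [key, hR]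
    unfold rho
    rw [← ENNReal.tsum_mul_left]
    refine ENNReal.tsum_le_tsum fun n => ?_
    rw [cesaroMean_smul, abs_of_pos (by positivity)]
    exact OF.scale φ _ (by positivity) (by rw [div_le_one ht0]; exact ht1)
  refine hb.trans ?_
  have hRt : R ≤ ENNReal.ofReal t := by
    rw [← ENNReal.ofReal_toReal hfin.ne]
    exact ENNReal.ofReal_le_ofReal (le_max_right _ _)
  calc ENNReal.ofReal (1 / t) * R ≤ ENNReal.ofReal (1 / t) * ENNReal.ofReal t := by gcongr
    _ = ENNReal.ofReal ((1 / t) * t) := (ENNReal.ofReal_mul (by positivity)).symm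
    _ ≤ 1 := by rw [one_div_mul_cancel ht0.ne']; simp

lemma groupSum (d : ℕ) (hd : 0 < d) (g : ℕ → ℝ≥0∞) :
    ∑' n : ℕ, g (n / d) = d * ∑' q : ℕ, g q := by
  haveI : NeZero d := ⟨hd.ne'⟩
  calc ∑' n : ℕ, g (n / d) = ∑' p : ℕ × Fin d, g p.1 := by
        rw [← (Nat.divModEquiv d).tsum_eq (fun p : ℕ × Fin d => g p.1)]
        exact tsum_congr fun n => by simp [Nat.divModEquiv]
    _ = ∑' q : ℕ, ∑' s : Fin d, g q :=
        ENNReal.tsum_prod (f := fun q (_ : Fin d) => g q)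
    _ = ∑' q : ℕ, (d : ℝ≥0∞) * g q := by
        refine tsum_congr fun q => ?_
        rw [tsum_fintype]
        simp [Finset.sum_const, nsmul_eq_mul]
    _ = d * ∑' q, g q := ENNReal.tsum_mul_left

lemma tail_const (φ : OrliczFunction) (htail : TailFinite φ) {c : ℝ} (hc : 0 ≤ c) :
    ∃ N : ℕ, ∑' n : ℕ, φ.toFun (c / ((N + n + 1 : ℕ) : ℝ)) < ⊤ := by
  obtain ⟨n₁, h1⟩ := htail
  set d : ℕ := ⌈c⌉₊ + 1 with hdd
  have hd : 0 < d := Nat.succ_pos _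
  have hcd : c ≤ d := (Nat.le_ceil c).trans (by exact_mod_cast Nat.le_succ _)
  set g : ℕ → ℝ≥0∞ := fun q => if n₁ + 1 ≤ q then φ.toFun (((q : ℕ) : ℝ)⁻¹) else 0 with hgg
  have hg : ∑' q, g q < ⊤ := by
    have hsplit : ∑ q ∈ Finset.range (n₁ + 1), g q + ∑' r : ℕ, g (r + (n₁ + 1)) = ∑' q, g q :=
      Summable.sum_add_tsum_nat_add' ENNReal.summable
    rw [← hsplit]
    have h0 : ∑ q ∈ Finset.range (n₁ + 1), g q = 0 := by
      refine Finset.sum_eq_zero fun q hq => ?_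
      have hq' := Finset.mem_range.mp hq
      rw [hgg]
      exact if_neg (Nat.not_le.mpr hq')
    rw [h0, zero_add]
    have he : ∀ r : ℕ, g (r + (n₁ + 1)) = φ.toFun (((n₁ + r + 1 : ℕ) : ℝ)⁻¹) := by
      intro r
      have h2 : r + (n₁ + 1) = n₁ + r + 1 := by omega
      rw [hgg, h2]
      exact if_pos (by omega)
    calc ∑' r : ℕ, g (r + (n₁ + 1)) = ∑' r : ℕ, φ.toFun (((n₁ + r + 1 : ℕ) : ℝ)⁻¹) :=
          tsum_congr he
      _ < ⊤ := h1
  refine ⟨d * (n₁ + 1), ?_⟩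
  have key : ∀ n : ℕ, φ.toFun (c / ((d * (n₁ + 1) + n + 1 : ℕ) : ℝ))
      ≤ g ((d * (n₁ + 1) + n + 1) / d) := by
    intro n
    set a : ℕ := d * (n₁ + 1) + n + 1 with haa
    have haM : n₁ + 1 ≤ a / d := by
      rw [Nat.le_div_iff_mul_le hd, Nat.mul_comm]
      omega
    have hq0 : 0 < a / d := lt_of_lt_of_le (by omega) haM
    have ha0 : 0 < a := by omega
    rw [hgg]
    simp only [if_pos haM]
    have hle : c / (a : ℝ) ≤ ((a / d : ℕ) : ℝ)⁻¹ := by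
      rw [← one_div ((a / d : ℕ) : ℝ),
        div_le_div_iff₀ (by exact_mod_cast ha0) (by exact_mod_cast hq0)]
      have hq1 : c * ((a / d : ℕ) : ℝ) ≤ (d : ℝ) * ((a / d : ℕ) : ℝ) :=
        mul_le_mul_of_nonneg_right hcd (by positivity)
      have hq2 : (d : ℝ) * ((a / d : ℕ) : ℝ) ≤ (a : ℝ) := by
        have h3 := Nat.div_mul_le_self a d
        calc (d : ℝ) * ((a / d : ℕ) : ℝ) = ((a / d * d : ℕ) : ℝ) := by push_cast; ring
          _ ≤ (a : ℝ) := by exact_mod_cast h3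
      linarith
    exact OF.mono φ (by positivity) hle
  calc ∑' n : ℕ, φ.toFun (c / ((d * (n₁ + 1) + n + 1 : ℕ) : ℝ))
      ≤ ∑' n : ℕ, g ((d * (n₁ + 1) + n + 1) / d) := ENNReal.tsum_le_tsum key
    _ ≤ ∑' a : ℕ, g (a / d) := by
        have hinj : Function.Injective (fun n : ℕ => d * (n₁ + 1) + n + 1) := fun a b h => by
          simp only at h; omega
        exact ENNReal.tsum_comp_le_tsum_of_injective hinj (fun a => g (a / d))
    _ = d * ∑' q, g q := groupSum d hd g
    _ < ⊤ := ENNReal.mul_lt_top (by simp) hg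

-- forward: A_φ → order continuous
lemma fwd (φ : OrliczFunction) (x : ℕ → ℝ) (hA : x ∈ Aphi φ)
    (xs : ℕ → ℕ → ℝ) (h0 : ∀ m i, 0 ≤ xs m i) (hle : ∀ m i, xs m i ≤ |x i|)
    (htnd : ∀ i, Tendsto (fun m => xs m i) atTop (nhds 0)) :
    Tendsto (fun m => luxNorm φ (xs m)) atTop (nhds 0) := by
  obtain ⟨-, hAk⟩ := hA
  refine Metric.tendsto_atTop.mpr fun ε hε => ?_
  set ε' : ℝ := ε / 2 with hε'def
  have hε' : 0 < ε' := by positivity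
  set k : ℝ := 1 / ε' with hkdef
  have hk : 0 < k := by positivity
  obtain ⟨nk, hnk⟩ := hAk k hk
  set f : ℕ → ℝ≥0∞ := fun n =>
    φ.toFun ((k / ((nk + n + 1 : ℕ) : ℝ)) * ∑ i ∈ Finset.range (nk + n + 1), |x i|) with hfdef
  have hts := ENNReal.tendsto_sum_nat_add f hnk.ne
  obtain ⟨J, hJ⟩ := (hts.eventually_lt_const (show (0:ℝ≥0∞) < 1/2 by norm_num)).exists
  set N : ℕ := nk + J with hNdef
  have htail2 : ∑' n : ℕ,
      φ.toFun ((k / ((N + n + 1 : ℕ) : ℝ)) * ∑ i ∈ Finset.range (N + n + 1), |x i|) ≤ 1/2 := by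
    refine le_of_eq_of_le (tsum_congr fun n => ?_) hJ.le
    rw [hfdef]
    have h2 : nk + (n + J) + 1 = N + n + 1 := by omega
    simp only [h2]
  -- head tends to zero
  have hhead : Tendsto
      (fun m => ∑ n ∈ Finset.range N, φ.toFun (cesaroMean (fun i => xs m i / ε') n))
      atTop (nhds 0) := by
    have hterm : ∀ n : ℕ, Tendsto
        (fun m => φ.toFun (cesaroMean (fun i => xs m i / ε') n)) atTop (nhds 0) := by
      intro n
      have hc : Tendsto (fun m => cesaroMean (fun i => xs m i / ε') n) atTop (nhds 0) := by
        have e : ∀ m, cesaroMean (fun i => xs m i / ε') n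
            = (∑ j ∈ Finset.range (n + 1), |xs m j|) / ε' / ((n : ℝ) + 1) := by
          intro m
          unfold cesaroMean
          rw [Finset.sum_div (f := fun j => |xs m j|)]
          congr 1
          refine Finset.sum_congr rfl fun j _ => ?_
          rw [abs_div, abs_of_pos hε']
        have hsum : Tendsto (fun m => ∑ j ∈ Finset.range (n + 1), |xs m j|) atTop (nhds 0) := by
          have := tendsto_finset_sum (Finset.range (n + 1))
            (fun j _ => (htnd j).abs (f := fun m => xs m j))
          simpa using this
        have : Tendsto (fun m => (∑ j ∈ Finset.range (n + 1), |xs m j|) / ε' / ((n : ℝ) + 1))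
            atTop (nhds 0) := by
          have := (hsum.div_const ε').div_const ((n : ℝ) + 1)
          simpa using this
        exact this.congr fun m => (e m).symm
      exact φ.continuousAtZero'.comp hc
    have := tendsto_finset_sum (Finset.range N) (fun n _ => hterm n)
    simpa using this
  have hev : ∀ᶠ m in atTop,
      ∑ n ∈ Finset.range N, φ.toFun (cesaroMean (fun i => xs m i / ε') n) < 1/2 :=
    hhead.eventually_lt_const (by norm_num)
  obtain ⟨M, hM⟩ := eventually_atTop.mp hev
  refine ⟨M, fun m hm => ?_⟩
  -- modular bound
  have hρ : rho φ (fun i => xs m i / ε') ≤ 1 := by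
    have hsplit : ∑ n ∈ Finset.range N, φ.toFun (cesaroMean (fun i => xs m i / ε') n)
        + ∑' n : ℕ, φ.toFun (cesaroMean (fun i => xs m i / ε') (n + N))
        = rho φ (fun i => xs m i / ε') :=
      Summable.sum_add_tsum_nat_add' ENNReal.summable
    rw [← hsplit]
    have htailm : ∑' n : ℕ, φ.toFun (cesaroMean (fun i => xs m i / ε') (n + N)) ≤ 1/2 := by
      refine le_trans (ENNReal.tsum_le_tsum fun n => ?_) htail2
      have hNn : n + N = N + n := by omega
      rw [hNn]
      refine OF.mono φ (cesaroMean_nonneg _ _) ?_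
      unfold cesaroMean
      have hcast : ((N + n : ℕ) : ℝ) + 1 = ((N + n + 1 : ℕ) : ℝ) := by push_cast; ring
      rw [hcast]
      rw [div_eq_mul_inv, div_eq_mul_inv, mul_comm (k * (((N + n + 1 : ℕ) : ℝ))⁻¹), ← mul_assoc]
      refine mul_le_mul_of_nonneg_right ?_ (by positivity)
      calc ∑ j ∈ Finset.range (N + n + 1), |xs m j / ε'|
          ≤ ∑ j ∈ Finset.range (N + n + 1), |x j| * k := by
            refine Finset.sum_le_sum fun j _ => ?_
            rw [abs_div, abs_of_pos hε', div_eq_mul_inv, hkdef, one_div]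
            exact mul_le_mul_of_nonneg_right ((abs_of_nonneg (h0 m j)).trans_le (hle m j))
              (by positivity)
        _ = (∑ j ∈ Finset.range (N + n + 1), |x j|) * k := by rw [← Finset.sum_mul]
    calc _ ≤ (1/2 : ℝ≥0∞) + 1/2 := add_le_add (hM m hm).le htailm
      _ = 1 := ENNReal.add_halves 1
  have hmem : ε' ∈ {lam : ℝ | 0 < lam ∧ rho φ (fun i => xs m i / lam) ≤ 1} := ⟨hε', hρ⟩
  have hbdd : BddBelow {lam : ℝ | 0 < lam ∧ rho φ (fun i => xs m i / lam) ≤ 1} :=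
    ⟨0, fun y hy => hy.1.le⟩
  have hub : luxNorm φ (xs m) ≤ ε' := csInf_le hbdd hmem
  have hnn : 0 ≤ luxNorm φ (xs m) := Real.sInf_nonneg fun y hy => hy.1.le
  rw [Real.dist_0_eq_abs, abs_of_nonneg hnn]
  calc luxNorm φ (xs m) ≤ ε' := hub
    _ < ε := by rw [hε'def]; linarith

lemma bwd (φ : OrliczFunction) (htail : TailFinite φ) (x : ℕ → ℝ) (hx : x ∈ cesOrlicz φ)
    (hOC : ∀ xs : ℕ → ℕ → ℝ, (∀ m i, 0 ≤ xs m i) → (∀ m i, xs m i ≤ |x i|) →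
      (∀ i, Tendsto (fun m => xs m i) atTop (nhds 0)) →
      Tendsto (fun m => luxNorm φ (xs m)) atTop (nhds 0)) :
    x ∈ Aphi φ := by
  refine ⟨hx, fun k hk => ?_⟩
  set xsf : ℕ → ℕ → ℝ := fun m i => if i < m then 0 else |x i| with hxsf
  have h0 : ∀ m i, 0 ≤ xsf m i := by
    intro m i; rw [hxsf]; dsimp only; split
    · exact le_rfl
    · exact abs_nonneg _
  have hle : ∀ m i, xsf m i ≤ |x i| := by
    intro m i; rw [hxsf]; dsimp only; split
    · exact abs_nonneg _
    · exact le_rfl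
  have htnd : ∀ i, Tendsto (fun m => xsf m i) atTop (nhds 0) := by
    intro i
    refine tendsto_atTop_of_eventually_const (i₀ := i + 1) fun m hm => ?_
    rw [hxsf]; exact if_pos (by omega)
  have hnorm := hOC xsf h0 hle htnd
  obtain ⟨m, hm⟩ := (hnorm.eventually_lt_const (show (0:ℝ) < 1/(2*k) by positivity)).exists
  -- the Luxemburg set for xsf m is nonempty
  obtain ⟨lam, hlam, hlamfin⟩ := hx
  have hfin2 : rho φ (fun i => lam * xsf m i) < ⊤ := by
    refine lt_of_le_of_lt (rho_mono φ fun i => ?_) hlamfin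
    rw [abs_mul, abs_mul]
    exact mul_le_mul_of_nonneg_left
      ((abs_of_nonneg (h0 m i)).trans_le (hle m i))
      (abs_nonneg lam)
  obtain ⟨lam0, hlam0pos, hlam0⟩ := lset_nonempty φ hlam hfin2
  have hne : {l : ℝ | 0 < l ∧ rho φ (fun i => xsf m i / l) ≤ 1}.Nonempty :=
    ⟨lam0, hlam0pos, hlam0⟩
  obtain ⟨μ, hμmem, hμlt⟩ := exists_lt_of_csInf_lt hne hm
  obtain ⟨hμpos, hμρ⟩ := hμmem
  -- ρ(2k · xsf m) ≤ 1
  have hρ2k : rho φ (fun i => 2 * k * xsf m i) ≤ 1 := by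
    refine le_trans (rho_mono φ fun i => ?_) hμρ
    have h2k : 2 * k * μ ≤ 1 := by
      have := (lt_div_iff₀ (by positivity : (0:ℝ) < 2 * k)).mp hμlt
      nlinarith
    rw [abs_of_nonneg (mul_nonneg (by positivity : (0:ℝ) ≤ 2 * k) (h0 m i)), abs_div,
      abs_of_nonneg (h0 m i), abs_of_pos hμpos, le_div_iff₀ hμpos]
    calc 2 * k * xsf m i * μ = (2 * k * μ) * xsf m i := by ring
      _ ≤ 1 * xsf m i := mul_le_mul_of_nonneg_right h2k (h0 m i)
      _ = xsf m i := one_mul _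
  -- head constant
  set C : ℝ := ∑ i ∈ Finset.range m, |x i| with hC
  have hC0 : 0 ≤ C := Finset.sum_nonneg fun i _ => abs_nonneg _
  obtain ⟨N, hN⟩ := tail_const φ htail (c := 2 * k * C) (by positivity)
  refine ⟨N, ?_⟩
  have bound : ∀ n : ℕ,
      φ.toFun ((k / ((N + n + 1 : ℕ) : ℝ)) * ∑ i ∈ Finset.range (N + n + 1), |x i|)
      ≤ φ.toFun (2 * k * C / ((N + n + 1 : ℕ) : ℝ))
        + φ.toFun (cesaroMean (fun i => 2 * k * xsf m i) (N + n)) := by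
    intro n
    have hpos : (0:ℝ) < ((N + n + 1 : ℕ) : ℝ) := by positivity
    -- partial sum decomposition
    have hid : ∀ i, |x i| = (if i < m then |x i| else 0) + xsf m i := by
      intro i; rw [hxsf]; dsimp only; split
      · rw [add_zero]
      · rw [zero_add]
    have hhead : ∑ i ∈ Finset.range (N + n + 1), (if i < m then |x i| else 0) ≤ C := by
      have hsub : Finset.range (N + n + 1) ⊆ Finset.range (m + (N + n + 1)) :=
        Finset.range_subset_range.mpr (Nat.le_add_left _ _)
      have h1 : ∑ i ∈ Finset.range (N + n + 1), (if i < m then |x i| else 0)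
          ≤ ∑ i ∈ Finset.range (m + (N + n + 1)), (if i < m then |x i| else 0) := by
        refine Finset.sum_le_sum_of_subset_of_nonneg hsub fun i _ _ => ?_
        split
        · exact abs_nonneg _
        · exact le_rfl
      have h2 : ∑ i ∈ Finset.range (m + (N + n + 1)), (if i < m then |x i| else 0) = C := by
        have hsub' : Finset.range m ⊆ Finset.range (m + (N + n + 1)) :=
          Finset.range_subset_range.mpr (Nat.le_add_right _ _)
        have hzero : ∀ i ∈ Finset.range (m + (N + n + 1)), i ∉ Finset.range m →
            (if i < m then |x i| else 0) = 0 := fun i _ hni =>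
          if_neg fun h => hni (Finset.mem_range.mpr h)
        calc ∑ i ∈ Finset.range (m + (N + n + 1)), (if i < m then |x i| else 0)
            = ∑ i ∈ Finset.range m, (if i < m then |x i| else 0) :=
              (Finset.sum_subset hsub' hzero).symm
          _ = ∑ i ∈ Finset.range m, |x i| :=
              Finset.sum_congr rfl fun i hi => if_pos (Finset.mem_range.mp hi)
          _ = C := hC.symm
      exact h1.trans_eq h2
    set T : ℝ := ∑ i ∈ Finset.range (N + n + 1), xsf m i with hT
    have hT0 : 0 ≤ T := Finset.sum_nonneg fun i _ => h0 m i
    have hS : ∑ i ∈ Finset.range (N + n + 1), |x i| ≤ C + T := by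
      calc ∑ i ∈ Finset.range (N + n + 1), |x i|
          = ∑ i ∈ Finset.range (N + n + 1), ((if i < m then |x i| else 0) + xsf m i) :=
            Finset.sum_congr rfl fun i _ => hid i
        _ = (∑ i ∈ Finset.range (N + n + 1), (if i < m then |x i| else 0)) + T :=
            Finset.sum_add_distrib
        _ ≤ C + T := add_le_add_left hhead T
    have harg : (k / ((N + n + 1 : ℕ) : ℝ)) * ∑ i ∈ Finset.range (N + n + 1), |x i|
        ≤ k * C / ((N + n + 1 : ℕ) : ℝ) + k * T / ((N + n + 1 : ℕ) : ℝ) := by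
      have := mul_le_mul_of_nonneg_left hS (le_of_lt (div_pos hk hpos))
      calc (k / ((N + n + 1 : ℕ) : ℝ)) * ∑ i ∈ Finset.range (N + n + 1), |x i|
          ≤ (k / ((N + n + 1 : ℕ) : ℝ)) * (C + T) := this
        _ = k * C / ((N + n + 1 : ℕ) : ℝ) + k * T / ((N + n + 1 : ℕ) : ℝ) := by ring
    have hargnn : (0:ℝ) ≤ (k / ((N + n + 1 : ℕ) : ℝ)) * ∑ i ∈ Finset.range (N + n + 1), |x i| := by
      have : (0:ℝ) ≤ ∑ i ∈ Finset.range (N + n + 1), |x i| :=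
        Finset.sum_nonneg fun i _ => abs_nonneg _
      positivity
    refine le_trans (OF.mono φ hargnn harg) ?_
    refine le_trans (OF.add_le φ _ _) ?_
    have e1 : 2 * (k * C / ((N + n + 1 : ℕ) : ℝ)) = 2 * k * C / ((N + n + 1 : ℕ) : ℝ) := by ring
    have e2 : 2 * (k * T / ((N + n + 1 : ℕ) : ℝ))
        = cesaroMean (fun i => 2 * k * xsf m i) (N + n) := by
      unfold cesaroMean
      have : ∑ j ∈ Finset.range (N + n + 1), |2 * k * xsf m j|
          = 2 * k * T := by
        rw [hT, Finset.mul_sum]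
        refine Finset.sum_congr rfl fun j _ => ?_
        rw [abs_of_nonneg (mul_nonneg (by positivity) (h0 m j))]
      rw [this]
      have hcast : ((N + n : ℕ) : ℝ) + 1 = ((N + n + 1 : ℕ) : ℝ) := by push_cast; ring
      rw [hcast]
      ring
    rw [e1, e2]
  calc ∑' n : ℕ, φ.toFun ((k / ((N + n + 1 : ℕ) : ℝ)) * ∑ i ∈ Finset.range (N + n + 1), |x i|)
      ≤ ∑' n : ℕ, (φ.toFun (2 * k * C / ((N + n + 1 : ℕ) : ℝ))
        + φ.toFun (cesaroMean (fun i => 2 * k * xsf m i) (N + n))) := ENNReal.tsum_le_tsum bound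
    _ = (∑' n : ℕ, φ.toFun (2 * k * C / ((N + n + 1 : ℕ) : ℝ)))
        + ∑' n : ℕ, φ.toFun (cesaroMean (fun i => 2 * k * xsf m i) (N + n)) := ENNReal.tsum_add
    _ ≤ (∑' n : ℕ, φ.toFun (2 * k * C / ((N + n + 1 : ℕ) : ℝ)))
        + rho φ (fun i => 2 * k * xsf m i) := by
        refine add_le_add_right ?_ _
        exact ENNReal.tsum_comp_le_tsum_of_injective (add_right_injective N)
          (fun n => φ.toFun (cesaroMean (fun i => 2 * k * xsf m i) n))
    _ < ⊤ := ENNReal.add_lt_top.mpr ⟨hN, lt_of_le_of_lt hρ2k (by simp)⟩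

/-- for `x ∈ ces_φ`, `x ∈ A_φ` iff `x` is order continuous. -/
theorem stmt_7 (φ : OrliczFunction) (htail : TailFinite φ)
    (x : ℕ → ℝ) (hx : x ∈ cesOrlicz φ) :
    x ∈ Aphi φ ↔
      ∀ xs : ℕ → ℕ → ℝ, (∀ m i, 0 ≤ xs m i) → (∀ m i, xs m i ≤ |x i|) →
        (∀ i, Tendsto (fun m => xs m i) atTop (nhds 0)) →
        Tendsto (fun m => luxNorm φ (xs m)) atTop (nhds 0) := by
  constructor
  · intro hA xs a b c
    exact fwd φ x hA xs a b c
  · intro hOC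
    exact bwd φ htail x hx hOC
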